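/- Let u be a 1-periodic incompressible Lipschitz vector field on ℝⁿ and let M = k𝕋 × 𝕋^{n−1} for an integer k ≥ 2. Suppose ψ ∈ H¹(M) satisfies u·∇ψ = iλψ with λ ≠ 0. Then the flow u on the unit torus 𝕋ⁿ admits an H¹(𝕋ⁿ) eigenfunction with some non-zero eigenvalue (in fact, with eigenvalue jλ for some integer 1 ≤ j ≤ k). -/

import Mathlib

open MeasureTheory Complex
open scoped NNReal Real

noncomputable section StmtAux

def stmtG (k : ℕ) (z : ℂ) : ℂ := z ^ k * (((((1 + normSq z) ^ (k-1))⁻¹ : ℝ)) : ℂ)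

def stmtN (z : ℂ) : ℂ →L[ℝ] ℝ := (2*z.re) • Complex.reCLM + (2*z.im) • Complex.imCLM

def stmtL (k : ℕ) (z : ℂ) : ℂ →L[ℝ] ℂ :=
  (z^k) • (Complex.ofRealCLM.comp
      ((-(((k-1 : ℕ):ℝ) * (1+normSq z)^(k-1-1)) / ((1+normSq z)^(k-1))^2) • stmtN z))
  + (((((1 + normSq z) ^ (k-1))⁻¹ : ℝ)) : ℂ) •
      ((ContinuousLinearMap.smulRight (1 : ℂ →L[ℂ] ℂ) ((k:ℂ) * z^(k-1))).restrictScalars ℝ)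

theorem hasFDerivAt_normSq (z : ℂ) : HasFDerivAt Complex.normSq (stmtN z) z := by
  have h : HasFDerivAt (fun w : ℂ => w.re * w.re + w.im * w.im)
      ((z.re • Complex.reCLM + z.re • Complex.reCLM) +
        (z.im • Complex.imCLM + z.im • Complex.imCLM)) z :=
    (Complex.reCLM.hasFDerivAt.mul Complex.reCLM.hasFDerivAt).add
      (Complex.imCLM.hasFDerivAt.mul Complex.imCLM.hasFDerivAt)
  have : (fun w : ℂ => w.re * w.re + w.im * w.im) = Complex.normSq := by
    funext w; simp [Complex.normSq_apply]
  rw [this] at h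
  convert h using 1
  unfold stmtN
  rw [two_mul, two_mul, add_smul, add_smul]

theorem one_add_normSq_pos (z : ℂ) : 0 < 1 + normSq z := by
  have := Complex.normSq_nonneg z; linarith

theorem hasFDerivAt_stmtG (k : ℕ) (z : ℂ) : HasFDerivAt (stmtG k) (stmtL k z) z := by
  have hd : (0:ℝ) < 1 + normSq z := one_add_normSq_pos z
  have h1 : HasFDerivAt (fun w : ℂ => 1 + normSq w) (stmtN z) z :=
    (hasFDerivAt_normSq z).const_add 1
  have h2 : HasDerivAt (fun t : ℝ => (t ^ (k-1))⁻¹)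
      (-(((k-1:ℕ):ℝ) * (1 + normSq z) ^ (k-1-1)) / ((1 + normSq z) ^ (k-1))^2)
      (1 + normSq z) := by
    exact (hasDerivAt_pow (k-1) _).inv (by positivity)
  have h3 : HasFDerivAt (fun w : ℂ => ((1 + normSq w) ^ (k-1))⁻¹)
      ((-(((k-1:ℕ):ℝ) * (1 + normSq z) ^ (k-1-1)) / ((1 + normSq z) ^ (k-1))^2) • stmtN z) z :=
    HasDerivAt.comp_hasFDerivAt (h₂ := fun t : ℝ => (t ^ (k-1))⁻¹) (f := fun w : ℂ => 1 + normSq w) z h2 h1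
  have h4 : HasFDerivAt (fun w : ℂ => (((((1 + normSq w) ^ (k-1))⁻¹ : ℝ)) : ℂ))
      (Complex.ofRealCLM.comp
        ((-(((k-1:ℕ):ℝ) * (1 + normSq z) ^ (k-1-1)) / ((1 + normSq z) ^ (k-1))^2) • stmtN z)) z :=
    Complex.ofRealCLM.hasFDerivAt.comp z h3
  have h5 : HasFDerivAt (fun w : ℂ => w ^ k)
      ((ContinuousLinearMap.smulRight (1 : ℂ →L[ℂ] ℂ) ((k:ℂ) * z^(k-1))).restrictScalars ℝ) z :=
    ((hasDerivAt_pow k z).hasFDerivAt).restrictScalars ℝ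
  exact h5.mul h4

theorem stmtN_apply (z w : ℂ) : stmtN z w = 2*z.re*w.re + 2*z.im*w.im := by
  simp [stmtN, mul_assoc]

theorem stmtL_apply (k : ℕ) (z w : ℂ) :
    stmtL k z w =
      z^k * (((-(((k-1 : ℕ):ℝ) * (1+normSq z)^(k-1-1)) / ((1+normSq z)^(k-1))^2) * stmtN z w : ℝ) : ℂ)
      + (((((1 + normSq z) ^ (k-1))⁻¹ : ℝ)) : ℂ) * (w * ((k:ℂ) * z^(k-1))) := by
  simp [stmtL, smul_eq_mul]

theorem abs_le_one_add_normSq (z : ℂ) : ‖z‖ ≤ 1 + normSq z := by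
  have h : (‖z‖)^2 = normSq z := Complex.sq_norm z
  nlinarith [norm_nonneg z]

theorem abs_stmtN_le (z w : ℂ) : |stmtN z w| ≤ 4 * ‖z‖ * ‖w‖ := by
  rw [stmtN_apply]
  have h1 := Complex.abs_re_le_norm z
  have h2 := Complex.abs_im_le_norm z
  have h3 := Complex.abs_re_le_norm w
  have h4 := Complex.abs_im_le_norm w
  have h5 := abs_nonneg z.re; have h6 := abs_nonneg z.im
  have t1 : |z.re| * |w.re| ≤ ‖z‖ * ‖w‖ :=
    mul_le_mul h1 h3 (abs_nonneg _) (norm_nonneg z)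
  have t2 : |z.im| * |w.im| ≤ ‖z‖ * ‖w‖ :=
    mul_le_mul h2 h4 (abs_nonneg _) (norm_nonneg z)
  have b1 : |2 * z.re * w.re| = 2 * (|z.re| * |w.re|) := by
    rw [abs_mul, abs_mul, _root_.abs_two]; ring
  have b2 : |2 * z.im * w.im| = 2 * (|z.im| * |w.im|) := by
    rw [abs_mul, abs_mul, _root_.abs_two]; ring
  calc |2 * z.re * w.re + 2 * z.im * w.im|
      ≤ |2 * z.re * w.re| + |2 * z.im * w.im| := abs_add_le _ _
    _ ≤ 4 * ‖z‖ * ‖w‖ := by rw [b1, b2]; nlinarith [t1, t2]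

theorem norm_stmtL_le (k : ℕ) (hk : 2 ≤ k) (z : ℂ) : ‖stmtL k z‖ ≤ 5*k := by
  obtain ⟨m, rfl⟩ : ∃ m, k = m + 2 := ⟨k-2, by omega⟩
  have e1 : m + 2 - 1 = m + 1 := by omega
  have e2 : m + 2 - 1 - 1 = m := by omega
  set d := 1 + normSq z with hdd
  have hd1 : (1:ℝ) ≤ d := by have := Complex.normSq_nonneg z; simp only [hdd]; linarith
  have hd0 : (0:ℝ) < d := by linarith
  set A := ‖z‖ with hAA
  have hA0 : (0:ℝ) ≤ A := norm_nonneg z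
  have hAd : A ≤ d := abs_le_one_add_normSq z
  have hA2 : A^2 ≤ d := by rw [hAA, Complex.sq_norm]; simp only [hdd]; linarith
  apply ContinuousLinearMap.opNorm_le_bound _ (by positivity)
  intro w
  rw [stmtL_apply, e2, e1]
  set W := ‖w‖ with hWW
  have hW0 : (0:ℝ) ≤ W := norm_nonneg w
  have hwW : ‖w‖ = W := rfl
  set c : ℝ := -(((m+1:ℕ):ℝ) * d^m) / (d^(m+1))^2 with hc
  have key1 : A^(m+1) ≤ d^(m+1) := pow_le_pow_left₀ hA0 hAd _
  have key2 : A^(m+3) * d^m ≤ (d^(m+1))^2 := by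
    have h2 : A^(m+3) ≤ d^(m+1) * d := by
      have h1 : A^(m+3) = A^(m+1) * A^2 := by ring
      rw [h1]; exact mul_le_mul key1 hA2 (by positivity) (by positivity)
    calc A^(m+3) * d^m ≤ (d^(m+1) * d) * d^m :=
          mul_le_mul_of_nonneg_right h2 (by positivity)
      _ = (d^(m+1))^2 := by ring
  have hcabs : |c| = ((m+1:ℕ):ℝ) * d^m / (d^(m+1))^2 := by
    rw [hc, abs_div, abs_neg, _root_.abs_of_nonneg (by positivity : (0:ℝ) ≤ ((m+1:ℕ):ℝ) * d^m),
      _root_.abs_of_nonneg (by positivity : (0:ℝ) ≤ (d^(m+1))^2)]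
  have n1 : ‖z^(m+2) * ((c * stmtN z w : ℝ) : ℂ)‖ = A^(m+2) * (|c| * |stmtN z w|) := by
    rw [norm_mul, norm_pow, ← hAA, Complex.norm_real, Real.norm_eq_abs,
      abs_mul]
  have n2 : ‖((((d ^ (m+1))⁻¹ : ℝ)) : ℂ) * (w * (((m+2:ℕ):ℂ) * z^(m+1)))‖
      = (d^(m+1))⁻¹ * (W * (((m+2:ℕ):ℝ) * A^(m+1))) := by
    rw [norm_mul, norm_mul, norm_mul, norm_pow, Complex.norm_real, Real.norm_eq_abs,
      _root_.abs_of_nonneg (by positivity : (0:ℝ) ≤ (d^(m+1))⁻¹), Complex.norm_natCast,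
      ← hAA, ← hWW]
  have hNle : |stmtN z w| ≤ 4*A*W := abs_stmtN_le z w
  calc ‖z^(m+2) * ((c * stmtN z w : ℝ) : ℂ)
        + ((((d ^ (m+1))⁻¹ : ℝ)) : ℂ) * (w * (((m+2:ℕ):ℂ) * z^(m+1)))‖
      ≤ ‖z^(m+2) * ((c * stmtN z w : ℝ) : ℂ)‖
        + ‖((((d ^ (m+1))⁻¹ : ℝ)) : ℂ) * (w * (((m+2:ℕ):ℂ) * z^(m+1)))‖ := norm_add_le _ _
    _ = A^(m+2) * (|c| * |stmtN z w|) + (d^(m+1))⁻¹ * (W * (((m+2:ℕ):ℝ) * A^(m+1))) := by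
        rw [n1, n2]
    _ ≤ A^(m+2) * ((((m+1:ℕ):ℝ) * d^m / (d^(m+1))^2) * (4*A*W))
        + (d^(m+1))⁻¹ * (W * (((m+2:ℕ):ℝ) * A^(m+1))) := by
        rw [hcabs]; gcongr
    _ = (4*((m+1:ℕ):ℝ)*W) * ((A^(m+3) * d^m) / (d^(m+1))^2)
        + (((m+2:ℕ):ℝ)*W) * (A^(m+1) / d^(m+1)) := by
        push_cast; ring
    _ ≤ (4*((m+1:ℕ):ℝ)*W) * 1 + (((m+2:ℕ):ℝ)*W) * 1 := by
        gcongr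
        · exact div_le_one_of_le₀ key2 (by positivity)
        · exact div_le_one_of_le₀ key1 (by positivity)
    _ ≤ 5*((m+2:ℕ):ℝ) * ‖w‖ := by rw [hwW]; push_cast; nlinarith [hW0]


theorem differentiable_stmtG (k : ℕ) : Differentiable ℝ (stmtG k) :=
  fun z => (hasFDerivAt_stmtG k z).differentiableAt

theorem continuous_stmtG (k : ℕ) : Continuous (stmtG k) :=
  (differentiable_stmtG k).continuous

theorem stmtG_eq_zero_iff (k : ℕ) (hk : k ≠ 0) (z : ℂ) : stmtG k z = 0 ↔ z = 0 := by
  unfold stmtG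
  have hd : (0:ℝ) < 1 + normSq z := one_add_normSq_pos z
  have h2 : ((((1 + normSq z) ^ (k-1))⁻¹ : ℝ) : ℂ) ≠ 0 := by
    rw [Ne, Complex.ofReal_eq_zero]
    positivity
  rw [mul_eq_zero]
  simp only [h2, or_false]
  exact pow_eq_zero_iff hk

theorem norm_stmtG_le (k : ℕ) (hk : 1 ≤ k) (z : ℂ) :
    ‖stmtG k z‖ ≤ ‖z‖ := by
  obtain ⟨m, rfl⟩ : ∃ m, k = m + 1 := ⟨k-1, by omega⟩
  unfold stmtG
  have hd : (0:ℝ) < 1 + normSq z := one_add_normSq_pos z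
  rw [norm_mul, Complex.norm_real, Real.norm_eq_abs, _root_.abs_of_pos (by positivity)]
  have h1 : ‖z ^ (m+1)‖ = (‖z‖) ^ (m+1) := by simp
  rw [h1, show m + 1 - 1 = m by omega]
  rw [inv_eq_one_div, mul_comm, div_mul_eq_mul_div, div_le_iff₀ (by positivity), one_mul]
  have h2 : (‖z‖) ^ m ≤ (1 + normSq z) ^ m :=
    pow_le_pow_left₀ (norm_nonneg z) (abs_le_one_add_normSq z) m
  calc (‖z‖)^(m+1) = (‖z‖) * (‖z‖)^m := by ring
    _ ≤ ‖z‖ * (1+normSq z)^m :=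
        mul_le_mul_of_nonneg_left h2 (norm_nonneg z)

theorem stmtG_unit (k : ℕ) (c z : ℂ) (h1 : normSq c = 1) (hck : c ^ k = 1) :
    stmtG k (c * z) = stmtG k z := by
  unfold stmtG
  rw [mul_pow, hck, one_mul, Complex.normSq_mul, h1, one_mul]

theorem stmtL_eig (k : ℕ) (hk : 1 ≤ k) (z : ℂ) (t : ℝ) :
    stmtL k z (Complex.I * (t:ℂ) * z) = Complex.I * ((((k:ℕ):ℝ) * t : ℝ) : ℂ) * stmtG k z := by
  obtain ⟨m, rfl⟩ : ∃ m, k = m + 1 := ⟨k-1, by omega⟩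
  rw [stmtL_apply, stmtN_apply]
  have hre : (Complex.I * (t:ℂ) * z).re = -(t * z.im) := by simp
  have him : (Complex.I * (t:ℂ) * z).im = t * z.re := by simp
  rw [hre, him]
  have h0 : 2*z.re*(-(t*z.im)) + 2*z.im*(t*z.re) = 0 := by ring
  rw [h0, mul_zero, Complex.ofReal_zero, mul_zero, zero_add]
  rw [show m + 1 - 1 = m by omega]
  unfold stmtG
  rw [show m + 1 - 1 = m by omega]
  push_cast
  ring

end StmtAux

/-- Lemma 4.2(ii): if a 1-periodic incompressible Lipschitz flow `u` on `ℝⁿ` has an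
`H¹` eigenfunction `ψ` on `M = k𝕋 × 𝕋ⁿ⁻¹` with eigenvalue `iλ`, `λ ≠ 0`, then `u` has an
`H¹(𝕋ⁿ)` eigenfunction with non-zero eigenvalue `i(jλ)` for some integer `1 ≤ j ≤ k`. -/
theorem stmt_5 (n : ℕ) (hn : 0 < n)
    (u : (Fin n → ℝ) → (Fin n → ℝ)) (Ku : ℝ≥0) (hu : LipschitzWith Ku u)
    (huper : ∀ (x : Fin n → ℝ) (j : Fin n), u (x + Pi.single j 1) = u x)
    (hdiv : ∀ᵐ x : Fin n → ℝ, ∑ i, fderiv ℝ u x (Pi.single i 1) i = 0)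
    (k : ℕ) (hk : 2 ≤ k)
    (F : Set (Fin n → ℝ))
    (hF : F = Set.univ.pi fun j => Set.Ico (0 : ℝ) (if j = (⟨0, hn⟩ : Fin n) then (k : ℝ) else 1))
    (C : Set (Fin n → ℝ)) (hC : C = Set.univ.pi fun _ => Set.Ico (0 : ℝ) 1)
    (ψ : (Fin n → ℝ) → ℂ)
    (hψper0 : ∀ x : Fin n → ℝ, ψ (x + Pi.single (⟨0, hn⟩ : Fin n) (k : ℝ)) = ψ x)
    (hψper : ∀ (x : Fin n → ℝ) (j : Fin n), j ≠ (⟨0, hn⟩ : Fin n) →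
      ψ (x + Pi.single j 1) = ψ x)
    (hψdiff : ∀ᵐ x : Fin n → ℝ, DifferentiableAt ℝ ψ x)
    (hψL2 : MemLp ψ 2 (volume.restrict F))
    (hψH1 : MemLp (fun x => ‖fderiv ℝ ψ x‖) 2 (volume.restrict F))
    (hψ0 : ¬ (∀ᵐ x ∂(volume.restrict F), ψ x = 0))
    (lam : ℝ) (hlam : lam ≠ 0)
    (heig : ∀ᵐ x : Fin n → ℝ, fderiv ℝ ψ x (u x) = (Complex.I * lam) • ψ x) :
    ∃ (φ : (Fin n → ℝ) → ℂ) (j : ℕ), 1 ≤ j ∧ j ≤ k ∧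
      (∀ (x : Fin n → ℝ) (i : Fin n), φ (x + Pi.single i 1) = φ x) ∧
      (∀ᵐ x : Fin n → ℝ, DifferentiableAt ℝ φ x) ∧
      MemLp φ 2 (volume.restrict C) ∧
      MemLp (fun x => ‖fderiv ℝ φ x‖) 2 (volume.restrict C) ∧
      ¬ (∀ᵐ x ∂(volume.restrict C), φ x = 0) ∧
      (∀ᵐ x : Fin n → ℝ, fderiv ℝ φ x (u x) = (Complex.I * ((j : ℝ) * lam)) • φ x) := by
  classical
  set i0 : Fin n := ⟨0, hn⟩ with hi0
  set e : Fin n → ℝ := Pi.single i0 1 with he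
  have hk0 : k ≠ 0 := by omega
  have hkR : (k:ℝ) ≠ 0 := Nat.cast_ne_zero.mpr hk0
  have hsingle : ∀ c : ℝ, Pi.single i0 c = c • e := by
    intro c; funext j
    by_cases hj : j = i0 <;> simp [he, Pi.single_apply, hj]
  have hcoord : ∀ (x : Fin n → ℝ) (c : ℝ) (j : Fin n),
      (x + c • e) j = x j + (if j = i0 then c else 0) := by
    intro x c j
    by_cases hj : j = i0 <;> simp [he, Pi.single_apply, hj]
  have hψk : ∀ x, ψ (x + (k:ℝ) • e) = ψ x := by
    intro x; rw [← hsingle]; exact hψper0 x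
  have hum : ∀ (x : Fin n → ℝ) (m : ℕ), u (x + (m:ℝ) • e) = u x := by
    intro x m
    induction m with
    | zero => simp
    | succ m ih =>
      have hv : x + ((m+1 : ℕ):ℝ) • e = (x + (m:ℝ) • e) + Pi.single i0 1 := by
        rw [← he]; push_cast [add_smul, one_smul]; abel
      rw [hv, huper _ i0, ih]
  -- roots of unity
  set θ : ℝ := 2 * Real.pi / k with hθ
  set ω : ℂ := Complex.exp ((θ:ℂ) * Complex.I) with hω
  have hω0 : ω ≠ 0 := Complex.exp_ne_zero _
  have hωabs : ‖ω‖ = 1 := Complex.norm_exp_ofReal_mul_I θ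
  have hωnormSq : Complex.normSq ω = 1 := by rw [← Complex.sq_norm, hωabs, one_pow]
  have hωpow_normSq : ∀ t : ℕ, Complex.normSq (ω ^ t) = 1 := by
    intro t; rw [map_pow, hωnormSq, one_pow]
  have hωabspow : ∀ t : ℕ, ‖ω ^ t‖ = 1 := by
    intro t; rw [norm_pow, hωabs, one_pow]
  have hωk : ω ^ k = 1 := by
    rw [hω, ← Complex.exp_nat_mul]
    have h1 : (k:ℂ) * ((θ:ℂ) * Complex.I) = 2 * (Real.pi:ℂ) * Complex.I := by
      have hkC : (k:ℂ) ≠ 0 := Nat.cast_ne_zero.mpr hk0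
      rw [hθ]; push_cast; field_simp
    rw [h1]
    exact_mod_cast Complex.exp_two_pi_mul_I
  have hωm1 : ∀ m : ℕ, 0 < m → m < k → ω ^ m ≠ 1 := by
    intro m hm0 hmk hcon
    rw [hω, ← Complex.exp_nat_mul, Complex.exp_eq_one_iff] at hcon
    obtain ⟨t, ht⟩ := hcon
    have h4 := congrArg Complex.im ht
    simp [Complex.mul_im, Complex.mul_re] at h4
    have hπ : (0:ℝ) < Real.pi := Real.pi_pos
    have h5 : (m:ℝ) = (t:ℝ) * k := by
      rw [hθ] at h4
      field_simp at h4
      nlinarith [h4]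
    have h7 : (m:ℤ) = t * k := by exact_mod_cast h5
    have hkz : (0:ℤ) < (k:ℤ) := by exact_mod_cast Nat.pos_of_ne_zero hk0
    have hm0' : (0:ℤ) < (m:ℤ) := by exact_mod_cast hm0
    have hmk' : (m:ℤ) < (k:ℤ) := by exact_mod_cast hmk
    rcases le_or_gt t 0 with h | h
    · nlinarith
    · nlinarith
  -- the decomposition
  set Ψ : ℕ → (Fin n → ℝ) → ℂ :=
    fun j x => ∑ m ∈ Finset.range k, ω ^ (j*m) * ψ (x + (m:ℝ) • e) with hΨdef
  have hsum : ∀ x, ∑ j ∈ Finset.range k, Ψ j x = (k:ℂ) * ψ x := by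
    intro x
    simp only [hΨdef]
    rw [Finset.sum_comm]
    have hterm : ∀ m ∈ Finset.range k,
        (∑ j ∈ Finset.range k, ω ^ (j*m) * ψ (x + (m:ℝ)•e)) =
        (if m = 0 then (k:ℂ) * ψ x else 0) := by
      intro m hm
      rw [← Finset.sum_mul]
      by_cases hm0 : m = 0
      · subst hm0
        simp [Finset.sum_const, Finset.card_range, mul_comm]
      · have hmlt := Finset.mem_range.mp hm
        have hne : ω ^ m ≠ 1 := hωm1 m (Nat.pos_of_ne_zero hm0) hmlt
        have hgeom : ∑ j ∈ Finset.range k, ω ^ (j*m) = 0 := by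
          have hpm : ∀ j : ℕ, ω ^ (j*m) = (ω^m)^j := by
            intro j; rw [← pow_mul, mul_comm]
          simp_rw [hpm]
          rw [geom_sum_eq hne]
          have hone : (ω^m)^k = 1 := by
            rw [← pow_mul, mul_comm, pow_mul, hωk, one_pow]
          rw [hone]; simp
        rw [hgeom, zero_mul]; simp [hm0]
    rw [Finset.sum_congr rfl hterm, Finset.sum_ite_eq' (Finset.range k) 0 (fun _ => (k:ℂ) * ψ x)]
    simp [Finset.mem_range, Nat.pos_of_ne_zero hk0]
  have hshiftsum : ∀ (j : ℕ) (x : Fin n → ℝ),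
      (∑ m ∈ Finset.range k, ω ^ (j*(m+1)) * ψ (x + ((m+1:ℕ):ℝ)•e))
        = ∑ m ∈ Finset.range k, ω ^ (j*m) * ψ (x + (m:ℝ)•e) := by
    intro j x
    set f : ℕ → ℂ := fun m => ω ^ (j*m) * ψ (x + (m:ℝ)•e) with hf
    have hf0 : f k = f 0 := by
      simp only [hf]
      simp [hψk, mul_comm j k, pow_mul, hωk]
    have h3 : (∑ m ∈ Finset.range k, f (m+1)) + f 0
        = (∑ m ∈ Finset.range k, f m) + f k :=
      (Finset.sum_range_succ' f k).symm.trans (Finset.sum_range_succ f k)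
    rw [hf0] at h3
    exact add_right_cancel h3
  have hqp : ∀ (j : ℕ) (x : Fin n → ℝ), ω ^ j * Ψ j (x + e) = Ψ j x := by
    intro j x
    have hshift : ∀ m : ℕ, x + e + (m:ℝ)•e = x + ((m+1:ℕ):ℝ)•e := by
      intro m; push_cast [add_smul, one_smul]; abel
    simp only [hΨdef]
    calc ω ^ j * ∑ m ∈ Finset.range k, ω ^ (j*m) * ψ (x + e + (m:ℝ)•e)
        = ∑ m ∈ Finset.range k, ω ^ (j*(m+1)) * ψ (x + ((m+1:ℕ):ℝ)•e) := by
          rw [Finset.mul_sum]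
          refine Finset.sum_congr rfl (fun m _ => ?_)
          rw [hshift m, ← mul_assoc, ← pow_add, show j + j*m = j*(m+1) by ring]
      _ = ∑ m ∈ Finset.range k, ω ^ (j*m) * ψ (x + (m:ℝ)•e) := hshiftsum j x
  have hqpm : ∀ (j m : ℕ) (x : Fin n → ℝ), ω ^ (j*m) * Ψ j (x + (m:ℝ)•e) = Ψ j x := by
    intro j m
    induction m with
    | zero => intro x; simp
    | succ m ih =>
      intro x
      have hv : x + ((m+1:ℕ):ℝ)•e = (x + (m:ℝ)•e) + e := by
        push_cast [add_smul, one_smul]; abel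
      rw [hv]
      calc ω^(j*(m+1)) * Ψ j ((x + (m:ℝ)•e) + e)
          = ω^(j*m) * (ω^j * Ψ j ((x + (m:ℝ)•e) + e)) := by
            rw [← mul_assoc, ← pow_add, show j*m + j = j*(m+1) by ring]
        _ = ω^(j*m) * Ψ j (x + (m:ℝ)•e) := by rw [hqp]
        _ = Ψ j x := ih x
  have hper' : ∀ (j : ℕ) (x : Fin n → ℝ) (i : Fin n), i ≠ i0 →
      Ψ j (x + Pi.single i 1) = Ψ j x := by
    intro j x i hi
    simp only [hΨdef]
    refine Finset.sum_congr rfl (fun m _ => ?_)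
    rw [add_right_comm, hψper _ i hi]
  -- a.e. translated hypotheses
  have hae : ∀ᵐ x : Fin n → ℝ, ∀ m : ℕ,
      DifferentiableAt ℝ ψ (x + (m:ℝ)•e) ∧
      fderiv ℝ ψ (x + (m:ℝ)•e) (u (x + (m:ℝ)•e)) = (Complex.I * lam) • ψ (x + (m:ℝ)•e) := by
    rw [ae_all_iff]
    intro m
    exact ((measurePreserving_add_right volume ((m:ℝ)•e)).quasiMeasurePreserving).ae
      (hψdiff.and heig)
  -- derivative of Ψ j at good points
  have hDer : ∀ (j : ℕ) (x : Fin n → ℝ), (∀ m : ℕ, DifferentiableAt ℝ ψ (x + (m:ℝ)•e)) →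
      HasFDerivAt (Ψ j)
        (∑ m ∈ Finset.range k, ω ^ (j*m) • fderiv ℝ ψ (x + (m:ℝ)•e)) x := by
    intro j x hx
    have hterms : ∀ m ∈ Finset.range k,
        HasFDerivAt (fun y => ω ^ (j*m) * ψ (y + (m:ℝ)•e))
          (ω ^ (j*m) • fderiv ℝ ψ (x + (m:ℝ)•e)) x := by
      intro m _
      have h1 : HasFDerivAt (fun y : Fin n → ℝ => y + (m:ℝ)•e)
          (ContinuousLinearMap.id ℝ (Fin n → ℝ)) x := (hasFDerivAt_id x).add_const _
      have h2 := ((hx m).hasFDerivAt).comp x h1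
      rw [ContinuousLinearMap.comp_id] at h2
      exact h2.const_mul _
    have h3 := HasFDerivAt.fun_sum hterms
    simp only [hΨdef]
    exact h3
  -- measurable sets
  have hCmeas : MeasurableSet C := by
    rw [hC]; exact MeasurableSet.univ_pi fun j => measurableSet_Ico
  have hFmeas : MeasurableSet F := by
    rw [hF]; exact MeasurableSet.univ_pi fun j => measurableSet_Ico
  set Cm : ℕ → Set (Fin n → ℝ) := fun m => Set.univ.pi fun j =>
    Set.Ico (if j = i0 then (m:ℝ) else 0) (if j = i0 then (m:ℝ)+1 else 1) with hCmdef
  have hCmmeas : ∀ m, MeasurableSet (Cm m) := fun m =>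
    MeasurableSet.univ_pi fun j => measurableSet_Ico
  have hpre : ∀ m : ℕ, (fun x => x + (m:ℝ)•e) ⁻¹' (Cm m) = C := by
    intro m
    ext x
    simp only [Set.mem_preimage, hCmdef, hC, Set.mem_pi, Set.mem_univ, forall_true_left,
      Set.mem_Ico, hcoord]
    constructor
    · intro h j
      have hj := h j
      by_cases hji : j = i0 <;> simp [hji] at hj ⊢ <;> constructor <;> linarith [hj.1, hj.2]
    · intro h j
      have hj := h j
      by_cases hji : j = i0 <;> simp [hji] at hj ⊢ <;> constructor <;> linarith [hj.1, hj.2]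
  have hCmF : ∀ m : ℕ, m < k → Cm m ⊆ F := by
    intro m hm x hx
    rw [hF]
    rw [hCmdef] at hx
    simp only [Set.mem_pi, Set.mem_univ, forall_true_left, Set.mem_Ico] at hx ⊢
    intro j
    have hj := hx j
    have hmk : (m:ℝ) + 1 ≤ (k:ℝ) := by exact_mod_cast Nat.succ_le_of_lt hm
    have hm0 : (0:ℝ) ≤ (m:ℝ) := Nat.cast_nonneg m
    by_cases hji : j = i0 <;> simp [hji] at hj ⊢ <;> constructor <;> linarith [hj.1, hj.2]
  -- L² facts for translates
  have hmemT : ∀ m : ℕ, m < k →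
      MemLp (fun x => ψ (x + (m:ℝ)•e)) 2 (volume.restrict C) ∧
      MemLp (fun x => ‖fderiv ℝ ψ (x + (m:ℝ)•e)‖) 2 (volume.restrict C) := by
    intro m hm
    have hmp : MeasurePreserving (fun x => x + (m:ℝ)•e)
        (volume.restrict C) (volume.restrict (Cm m)) := by
      have h := (measurePreserving_add_right volume ((m:ℝ)•e)).restrict_preimage (hCmmeas m)
      rwa [hpre m] at h
    have hsub : volume.restrict (Cm m) ≤ volume.restrict F :=
      Measure.restrict_mono (hCmF m hm) le_rfl
    exact ⟨(hψL2.mono_measure hsub).comp_measurePreserving hmp,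
           (hψH1.mono_measure hsub).comp_measurePreserving hmp⟩
  have hΨmem : ∀ j : ℕ, MemLp (Ψ j) 2 (volume.restrict C) := by
    intro j
    have h := memLp_finset_sum' (Finset.range k)
      (f := fun m (x : Fin n → ℝ) => ω ^ (j*m) * ψ (x + (m:ℝ)•e))
      (fun m hm => ((hmemT m (Finset.mem_range.mp hm)).1).const_mul _)
    have hfun : (∑ mm ∈ Finset.range k, fun (x : Fin n → ℝ) => ω ^ (j * mm) * ψ (x + (mm:ℝ) • e))
        = fun x => ∑ mm ∈ Finset.range k, ω ^ (j*mm) * ψ (x + (mm:ℝ)•e) := by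
      funext x; simp
    rw [hfun] at h
    exact h
  have hHmem : MemLp (fun x => ∑ m ∈ Finset.range k, ‖fderiv ℝ ψ (x + (m:ℝ)•e)‖) 2
      (volume.restrict C) := by
    have h := memLp_finset_sum' (Finset.range k)
      (f := fun m (x : Fin n → ℝ) => ‖fderiv ℝ ψ (x + (m:ℝ)•e)‖)
      (fun m hm => (hmemT m (Finset.mem_range.mp hm)).2)
    have hfun : (∑ mm ∈ Finset.range k, fun (x : Fin n → ℝ) => ‖fderiv ℝ ψ (x + (mm:ℝ) • e)‖)
        = fun x => ∑ mm ∈ Finset.range k, ‖fderiv ℝ ψ (x + (mm:ℝ)•e)‖ := by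
      funext x; simp
    rw [hfun] at h
    exact h
  -- some Ψ j is nontrivial on C
  have hex : ∃ j0, j0 < k ∧ ¬ (∀ᵐ x ∂(volume.restrict C), Ψ j0 x = 0) := by
    by_contra hcon
    push_neg at hcon
    apply hψ0
    have hnull : ∀ j m : ℕ, j < k → m < k →
        volume ({x | ¬ Ψ j x = 0} ∩ Cm m) = 0 := by
      intro j m hj hm
      have h1 : volume ({x | ¬ Ψ j x = 0} ∩ C) = 0 := by
        have h2 := hcon j hj
        rw [ae_iff, Measure.restrict_apply' hCmeas] at h2
        exact h2
      have h3 : ({x | ¬ Ψ j x = 0} ∩ Cm m) ⊆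
          (fun x => x + (-(m:ℝ))•e) ⁻¹' ({x | ¬ Ψ j x = 0} ∩ C) := by
        rintro x ⟨hx1, hx2⟩
        have hv : x + (-(m:ℝ))•e + (m:ℝ)•e = x := by
          rw [add_assoc, ← add_smul]; simp
        constructor
        · have hq := hqpm j m (x + (-(m:ℝ))•e)
          rw [hv] at hq
          intro hz
          apply hx1
          have h0 : ω^(j*m) * Ψ j x = 0 := by rw [hq, hz]
          exact (mul_eq_zero.mp h0).resolve_left (pow_ne_zero _ hω0)
        · have hmem : x + (-(m:ℝ))•e ∈ (fun y => y + (m:ℝ)•e) ⁻¹' (Cm m) := by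
            simp only [Set.mem_preimage]
            rw [hv]; exact hx2
          rwa [hpre m] at hmem
      have h4 := (measurePreserving_add_right volume
        ((-(m:ℝ))•e)).quasiMeasurePreserving.preimage_null h1
      exact measure_mono_null h3 h4
    have hN : volume (⋃ m ∈ ((Finset.range k : Finset ℕ) : Set ℕ),
        ⋃ j ∈ ((Finset.range k : Finset ℕ) : Set ℕ),
        ({x | ¬ Ψ j x = 0} ∩ Cm m)) = 0 := by
      rw [measure_biUnion_null_iff (Finset.range k).countable_toSet]
      intro m hm
      rw [measure_biUnion_null_iff (Finset.range k).countable_toSet]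
      intro j hj
      exact hnull j m (Finset.mem_range.mp hj) (Finset.mem_range.mp hm)
    rw [ae_iff, Measure.restrict_apply' hFmeas]
    refine measure_mono_null ?_ hN
    rintro x ⟨hx1, hx2⟩
    have hx0 : 0 ≤ x i0 ∧ x i0 < (k:ℝ) := by
      rw [hF] at hx2
      have h := hx2 i0 (Set.mem_univ _)
      simpa using h
    have hmk : Nat.floor (x i0) < k := (Nat.floor_lt hx0.1).mpr hx0.2
    have hxC : x ∈ Cm (Nat.floor (x i0)) := by
      rw [hCmdef]
      simp only [Set.mem_pi, Set.mem_univ, forall_true_left, Set.mem_Ico]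
      intro j
      by_cases hji : j = i0
      · subst hji
        simp only [if_pos rfl]
        exact ⟨Nat.floor_le hx0.1, Nat.lt_floor_add_one _⟩
      · simp only [if_neg hji]
        rw [hF] at hx2
        have h := hx2 j (Set.mem_univ _)
        simp only [Set.mem_Ico] at h
        rw [if_neg hji] at h
        exact h
    have hxj : ∃ j ∈ Finset.range k, Ψ j x ≠ 0 := by
      apply Finset.exists_ne_zero_of_sum_ne_zero
      rw [hsum]
      exact mul_ne_zero (Nat.cast_ne_zero.mpr hk0) hx1
    obtain ⟨j, hjmem, hjne⟩ := hxj
    exact Set.mem_biUnion (Finset.mem_coe.mpr (Finset.mem_range.mpr hmk))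
      (Set.mem_biUnion (Finset.mem_coe.mpr hjmem) ⟨hjne, hxC⟩)
  obtain ⟨j0, hj0k, hj0⟩ := hex
  -- the eigenfunction
  refine ⟨fun x => stmtG k (Ψ j0 x), k, by omega, le_refl k, ?_, ?_, ?_, ?_, ?_, ?_⟩
  · -- periodicity
    intro x i
    show stmtG k (Ψ j0 (x + Pi.single i 1)) = stmtG k (Ψ j0 x)
    by_cases hi : i = i0
    · subst hi
      have hck : (ω ^ j0) ^ k = 1 := by
        rw [← pow_mul, mul_comm j0 k, pow_mul, hωk, one_pow]
      calc stmtG k (Ψ j0 (x + Pi.single i0 1)) = stmtG k (Ψ j0 (x + e)) := by rw [← he]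
        _ = stmtG k (ω ^ j0 * Ψ j0 (x+e)) := (stmtG_unit k _ _ (hωpow_normSq j0) hck).symm
        _ = stmtG k (Ψ j0 x) := by rw [hqp j0 x]
    · rw [hper' j0 x i hi]
  · -- a.e. differentiability
    filter_upwards [hae] with x hx
    exact ((hasFDerivAt_stmtG k (Ψ j0 x)).comp x
      (hDer j0 x (fun m => (hx m).1))).differentiableAt
  · -- MemLp of φ
    refine MemLp.of_le (hΨmem j0)
      ((continuous_stmtG k).comp_aestronglyMeasurable (hΨmem j0).1) ?_
    refine Filter.Eventually.of_forall (fun x => ?_)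
    simpa using norm_stmtG_le k (by omega) (Ψ j0 x)
  · -- MemLp of the gradient norm
    have hbig : MemLp (fun x => (5*(k:ℝ)) *
        ∑ m ∈ Finset.range k, ‖fderiv ℝ ψ (x + (m:ℝ)•e)‖) 2 (volume.restrict C) :=
      hHmem.const_mul _
    refine MemLp.of_le hbig ((measurable_fderiv ℝ _).norm.aestronglyMeasurable) ?_
    apply ae_restrict_of_ae
    filter_upwards [hae] with x hx
    have hΨ' := hDer j0 x (fun m => (hx m).1)
    have hcomp := (hasFDerivAt_stmtG k (Ψ j0 x)).comp x hΨ'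
    have hf := hcomp.fderiv
    have hsumnn : (0:ℝ) ≤ ∑ m ∈ Finset.range k, ‖fderiv ℝ ψ (x + (m:ℝ)•e)‖ :=
      Finset.sum_nonneg (fun m _ => norm_nonneg _)
    rw [Real.norm_eq_abs, Real.norm_eq_abs, _root_.abs_of_nonneg (norm_nonneg _),
      _root_.abs_of_nonneg (by positivity)]
    rw [show (fun x => stmtG k (Ψ j0 x)) = (stmtG k) ∘ (Ψ j0) from rfl, hf]
    calc ‖(stmtL k (Ψ j0 x)).comp
          (∑ m ∈ Finset.range k, ω ^ (j0*m) • fderiv ℝ ψ (x + (m:ℝ)•e))‖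
        ≤ ‖stmtL k (Ψ j0 x)‖ *
          ‖∑ m ∈ Finset.range k, ω ^ (j0*m) • fderiv ℝ ψ (x + (m:ℝ)•e)‖ :=
          ContinuousLinearMap.opNorm_comp_le _ _
      _ ≤ (5*k) * ∑ m ∈ Finset.range k, ‖fderiv ℝ ψ (x + (m:ℝ)•e)‖ := by
          refine mul_le_mul (norm_stmtL_le k hk _) ?_ (norm_nonneg _) (by positivity)
          calc ‖∑ m ∈ Finset.range k, ω ^ (j0*m) • fderiv ℝ ψ (x + (m:ℝ)•e)‖
              ≤ ∑ m ∈ Finset.range k, ‖ω ^ (j0*m) • fderiv ℝ ψ (x + (m:ℝ)•e)‖ :=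
              norm_sum_le _ _
            _ = ∑ m ∈ Finset.range k, ‖fderiv ℝ ψ (x + (m:ℝ)•e)‖ := by
              refine Finset.sum_congr rfl (fun m _ => ?_)
              rw [norm_smul (ω ^ (j0*m)) (fderiv ℝ ψ (x + (m:ℝ)•e)),
                hωabspow, one_mul]
  · -- nontriviality
    intro hcon
    apply hj0
    filter_upwards [hcon] with x hx
    exact (stmtG_eq_zero_iff k hk0 (Ψ j0 x)).mp hx
  · -- eigenfunction equation
    filter_upwards [hae] with x hx
    have hΨ' := hDer j0 x (fun m => (hx m).1)
    have happ : (∑ m ∈ Finset.range k, ω^(j0*m) • fderiv ℝ ψ (x + (m:ℝ)•e)) (u x)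
        = (Complex.I * lam) • Ψ j0 x := by
      rw [ContinuousLinearMap.sum_apply]
      have hterm : ∀ m ∈ Finset.range k,
          (ω^(j0*m) • fderiv ℝ ψ (x+(m:ℝ)•e)) (u x)
          = (Complex.I*lam) • (ω^(j0*m) * ψ (x+(m:ℝ)•e)) := by
        intro m _
        rw [ContinuousLinearMap.smul_apply, ← hum x m, (hx m).2]
        simp only [smul_eq_mul]; ring
      rw [Finset.sum_congr rfl hterm, ← Finset.smul_sum]
    have hcomp := (hasFDerivAt_stmtG k (Ψ j0 x)).comp x hΨ'
    have hf := hcomp.fderiv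
    rw [show (fun x => stmtG k (Ψ j0 x)) = (stmtG k) ∘ (Ψ j0) from rfl, hf]
    rw [ContinuousLinearMap.comp_apply, happ, smul_eq_mul]
    have heq := stmtL_eig k (by omega) (Ψ j0 x) lam
    rw [heq, smul_eq_mul]
    push_cast
    ring
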